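/- For the Butcher table of Table 1 applied as a Lawson scheme (SLRK6) to the scalar test equation ẋ = λ₁x + λ₂x: with z₁ = hλ₁, z₂ = hλ₂, the Lawson stages U i = exp(c i · z₂) · u₀ + Σ_{j<i} a(i,j) · exp((c i − c j) · z₂) · (z₁ · U j) and the update u⁺ = exp(z₂) · u₀ + Σ_i b i · exp((1 − c i) · z₂) · (z₁ · U i) satisfy u⁺ = e^{z₂} · (1 + z₁ + z₁²/2! + z₁³/3! + z₁⁴/4! + z₁⁵/5! + z₁⁶/6! + (29/178200) z₁⁷) · u₀ for all λ₁, λ₂, h, u₀ ∈ ℂ. -/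
import Mathlib


open Finset Complex

/-- Coefficient matrix of Table 1, regarded as complex numbers. -/
noncomputable def a : Fin 8 → Fin 8 → ℂ :=
  !![0,      0,      0,      0,     0,      0,      0,     0;
     1/6,    0,      0,      0,     0,      0,      0,     0;
     1/12,   1/12,   0,      0,     0,      0,      0,     0;
     0,      -4/33,  5/11,   0,     0,      0,      0,     0;
     -1/4,   -29/44, 31/22,  0,     0,      0,      0,     0;
     3/11,   8/33,   -4/11,  1/11,  14/33,  0,      0,     0;
     -17/48, -5/12,  1,      1,     -13/12, 11/16,  0,     0;
     20/39,  12/39,  -31/39, -1/39, 34/39,  -11/39, 16/39, 0]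

/-- Weights of Table 1 regarded as complex numbers. -/
noncomputable def b : Fin 8 → ℂ := ![13/200, 0, 4/25, 11/40, 0, 11/40, 4/25, 13/200]

/-- Abscissae of Table 1. -/
noncomputable def c : Fin 8 → ℂ := fun i => ∑ j, a i j

set_option maxHeartbeats 2000000

/-- applying Table 1 as a Lawson scheme (SLRK6) to the test equation
`ẋ = λ₁x + λ₂x`, the update satisfies
`u⁺ = e^{z₂}(1 + z₁ + z₁²/2! + z₁³/3! + z₁⁴/4! + z₁⁵/5! + z₁⁶/6! + (29/178200) z₁⁷) u₀`. -/
theorem SLRK6_stability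
    (lam₁ lam₂ h u₀ : ℂ) (z₁ z₂ : ℂ) (hz₁ : z₁ = h * lam₁) (hz₂ : z₂ = h * lam₂)
    (U : Fin 8 → ℂ)
    (hU : ∀ i, U i = Complex.exp (c i * z₂) * u₀ +
      ∑ j ∈ Finset.univ.filter (fun j => j < i),
        a i j * Complex.exp ((c i - c j) * z₂) * (z₁ * U j))
    (uplus : ℂ)
    (huplus : uplus = Complex.exp z₂ * u₀ +
      ∑ i, b i * Complex.exp ((1 - c i) * z₂) * (z₁ * U i)) :
    uplus = Complex.exp z₂ *
      (1 + z₁ + z₁ ^ 2 / (Nat.factorial 2 : ℂ) + z₁ ^ 3 / (Nat.factorial 3 : ℂ)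
         + z₁ ^ 4 / (Nat.factorial 4 : ℂ) + z₁ ^ 5 / (Nat.factorial 5 : ℂ)
         + z₁ ^ 6 / (Nat.factorial 6 : ℂ) + (29 / 178200) * z₁ ^ 7) * u₀ := by
  
  have key : ∀ x y q r : ℂ,
      q * Complex.exp ((x - y) * z₂) * (z₁ * (Complex.exp (y * z₂) * r)) =
        q * Complex.exp (x * z₂) * (z₁ * r) := by
    intro x y q r
    have hxy : Complex.exp ((x - y) * z₂) * Complex.exp (y * z₂) = Complex.exp (x * z₂) := by
      rw [← Complex.exp_add]
      ring_nf
    linear_combination (q * z₁ * r) * hxy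
  have e1 : Complex.exp ((1 : ℂ) * z₂) = Complex.exp z₂ := by rw [one_mul]
  have a10 : a 1 0 = (1/6 : ℂ) := rfl
  have a20 : a 2 0 = (1/12 : ℂ) := rfl
  have a21 : a 2 1 = (1/12 : ℂ) := rfl
  have a30 : a 3 0 = (0 : ℂ) := rfl
  have a31 : a 3 1 = (-4/33 : ℂ) := rfl
  have a32 : a 3 2 = (5/11 : ℂ) := rfl
  have a40 : a 4 0 = (-1/4 : ℂ) := rfl
  have a41 : a 4 1 = (-29/44 : ℂ) := rfl
  have a42 : a 4 2 = (31/22 : ℂ) := rfl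
  have a43 : a 4 3 = (0 : ℂ) := rfl
  have a50 : a 5 0 = (3/11 : ℂ) := rfl
  have a51 : a 5 1 = (8/33 : ℂ) := rfl
  have a52 : a 5 2 = (-4/11 : ℂ) := rfl
  have a53 : a 5 3 = (1/11 : ℂ) := rfl
  have a54 : a 5 4 = (14/33 : ℂ) := rfl
  have a60 : a 6 0 = (-17/48 : ℂ) := rfl
  have a61 : a 6 1 = (-5/12 : ℂ) := rfl
  have a62 : a 6 2 = (1 : ℂ) := rfl
  have a63 : a 6 3 = (1 : ℂ) := rfl
  have a64 : a 6 4 = (-13/12 : ℂ) := rfl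
  have a65 : a 6 5 = (11/16 : ℂ) := rfl
  have a70 : a 7 0 = (20/39 : ℂ) := rfl
  have a71 : a 7 1 = (12/39 : ℂ) := rfl
  have a72 : a 7 2 = (-31/39 : ℂ) := rfl
  have a73 : a 7 3 = (-1/39 : ℂ) := rfl
  have a74 : a 7 4 = (34/39 : ℂ) := rfl
  have a75 : a 7 5 = (-11/39 : ℂ) := rfl
  have a76 : a 7 6 = (16/39 : ℂ) := rfl
  have b0 : b 0 = (13/200 : ℂ) := rfl
  have b1 : b 1 = (0 : ℂ) := rfl
  have b2 : b 2 = (4/25 : ℂ) := rfl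
  have b3 : b 3 = (11/40 : ℂ) := rfl
  have b4 : b 4 = (0 : ℂ) := rfl
  have b5 : b 5 = (11/40 : ℂ) := rfl
  have b6 : b 6 = (4/25 : ℂ) := rfl
  have b7 : b 7 = (13/200 : ℂ) := rfl
  have s1 : ∀ f : Fin 8 → ℂ, ∑ j ∈ Finset.univ.filter (fun j => j < (1:Fin 8)), f j = f 0 := by
    intro f
    rw [show Finset.univ.filter (fun j => j < (1:Fin 8)) = ({0} : Finset (Fin 8)) from by decide,
      Finset.sum_singleton]
    try ring
  have s2 : ∀ f : Fin 8 → ℂ, ∑ j ∈ Finset.univ.filter (fun j => j < (2:Fin 8)), f j = f 0 + f 1 := by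
    intro f
    rw [show Finset.univ.filter (fun j => j < (2:Fin 8)) = ({0,1} : Finset (Fin 8)) from by decide,
      Finset.sum_insert (by decide), Finset.sum_singleton]
    try ring
  have s3 : ∀ f : Fin 8 → ℂ, ∑ j ∈ Finset.univ.filter (fun j => j < (3:Fin 8)), f j = f 0 + f 1 + f 2 := by
    intro f
    rw [show Finset.univ.filter (fun j => j < (3:Fin 8)) = ({0,1,2} : Finset (Fin 8)) from by decide,
      Finset.sum_insert (by decide), Finset.sum_insert (by decide), Finset.sum_singleton]
    try ring
  have s4 : ∀ f : Fin 8 → ℂ, ∑ j ∈ Finset.univ.filter (fun j => j < (4:Fin 8)), f j = f 0 + f 1 + f 2 + f 3 := by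
    intro f
    rw [show Finset.univ.filter (fun j => j < (4:Fin 8)) = ({0,1,2,3} : Finset (Fin 8)) from by decide,
      Finset.sum_insert (by decide), Finset.sum_insert (by decide), Finset.sum_insert (by decide), Finset.sum_singleton]
    try ring
  have s5 : ∀ f : Fin 8 → ℂ, ∑ j ∈ Finset.univ.filter (fun j => j < (5:Fin 8)), f j = f 0 + f 1 + f 2 + f 3 + f 4 := by
    intro f
    rw [show Finset.univ.filter (fun j => j < (5:Fin 8)) = ({0,1,2,3,4} : Finset (Fin 8)) from by decide,
      Finset.sum_insert (by decide), Finset.sum_insert (by decide), Finset.sum_insert (by decide), Finset.sum_insert (by decide), Finset.sum_singleton]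
    try ring
  have s6 : ∀ f : Fin 8 → ℂ, ∑ j ∈ Finset.univ.filter (fun j => j < (6:Fin 8)), f j = f 0 + f 1 + f 2 + f 3 + f 4 + f 5 := by
    intro f
    rw [show Finset.univ.filter (fun j => j < (6:Fin 8)) = ({0,1,2,3,4,5} : Finset (Fin 8)) from by decide,
      Finset.sum_insert (by decide), Finset.sum_insert (by decide), Finset.sum_insert (by decide), Finset.sum_insert (by decide), Finset.sum_insert (by decide), Finset.sum_singleton]
    try ring
  have s7 : ∀ f : Fin 8 → ℂ, ∑ j ∈ Finset.univ.filter (fun j => j < (7:Fin 8)), f j = f 0 + f 1 + f 2 + f 3 + f 4 + f 5 + f 6 := by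
    intro f
    rw [show Finset.univ.filter (fun j => j < (7:Fin 8)) = ({0,1,2,3,4,5,6} : Finset (Fin 8)) from by decide,
      Finset.sum_insert (by decide), Finset.sum_insert (by decide), Finset.sum_insert (by decide), Finset.sum_insert (by decide), Finset.sum_insert (by decide), Finset.sum_insert (by decide), Finset.sum_singleton]
    try ring
  have h0 : U 0 = Complex.exp (c 0 * z₂) * (1 * u₀) := by
    rw [hU 0, show Finset.univ.filter (fun j => j < (0:Fin 8)) = (∅ : Finset (Fin 8)) from by decide]
    simp
  have h1 : U 1 = Complex.exp (c 1 * z₂) * ((1 + z₁/6) * u₀) := by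
    rw [hU 1, s1]
    simp only [h0, key, a10]
    ring
  have h2 : U 2 = Complex.exp (c 2 * z₂) * ((1 + z₁/6 + z₁^2/72) * u₀) := by
    rw [hU 2, s2]
    simp only [h0, h1, key, a20, a21]
    ring
  have h3 : U 3 = Complex.exp (c 3 * z₂) * ((1 + z₁/3 + z₁^2/18 + 5*z₁^3/792) * u₀) := by
    rw [hU 3, s3]
    simp only [h0, h1, h2, key, a30, a31, a32]
    ring
  have h4 : U 4 = Complex.exp (c 4 * z₂) * ((1 + z₁/2 + z₁^2/8 + 31*z₁^3/1584) * u₀) := by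
    rw [hU 4, s4]
    simp only [h0, h1, h2, h3, key, a40, a41, a42, a43]
    ring
  have h5 : U 5 = Complex.exp (c 5 * z₂) * ((1 + 2*z₁/3 + 2*z₁^2/9 + 7*z₁^3/132 + 29*z₁^4/3267) * u₀) := by
    rw [hU 5, s5]
    simp only [h0, h1, h2, h3, h4, key, a50, a51, a52, a53, a54]
    ring
  have h6 : U 6 = Complex.exp (c 6 * z₂) * ((1 + 5*z₁/6 + 25*z₁^2/72 + 25*z₁^3/288 + 205*z₁^4/9504 + 29*z₁^5/4752) * u₀) := by
    rw [hU 6, s6]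
    simp only [h0, h1, h2, h3, h4, h5, key, a60, a61, a62, a63, a64, a65]
    ring
  have h7 : U 7 = Complex.exp (c 7 * z₂) * ((1 + z₁ + z₁^2/2 + 55*z₁^3/312 + 145*z₁^4/3861 + 49*z₁^5/7722 + 29*z₁^6/11583) * u₀) := by
    rw [hU 7, s7]
    simp only [h0, h1, h2, h3, h4, h5, h6, key, a70, a71, a72, a73, a74, a75, a76]
    ring
  rw [huplus, Fin.sum_univ_eight]
  simp only [h0, h1, h2, h3, h4, h5, h6, h7, key, e1, b0, b1, b2, b3, b4, b5, b6, b7]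
  norm_num [Nat.factorial]
  ring
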